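/- Let G be a graph with threshold functions τ and τ′ satisfying τ′(v) ≤ τ(v) − 1 for every vertex v. Then dyn_{τ′}(G) ≤ dyn_τ(G) − 1. -/

import Mathlib

open SimpleGraph

/-- One step of the activation process: add every vertex having at least `τ v` active neighbors. -/
def activStep {V : Type*} (G : SimpleGraph V) (τ : V → ℕ) (A : Set V) : Set V :=
  A ∪ {v | τ v ≤ (G.neighborSet v ∩ A).ncard}

/-- `D` is a `τ`-dynamic monopoly: iterating the activation process from `D` activates all of `V`. -/
def IsDynMonopoly {V : Type*} (G : SimpleGraph V) (τ : V → ℕ) (D : Set V) : Prop :=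
  ∃ k : ℕ, (activStep G τ)^[k] D = Set.univ

/-- The `τ`-dynamic monopoly number: least cardinality of a `τ`-dynamic monopoly. -/
noncomputable def dynNum {V : Type*} (G : SimpleGraph V) (τ : V → ℕ) : ℕ :=
  sInf {k | ∃ D : Set V, IsDynMonopoly G τ D ∧ D.ncard = k}

/-- Dynamic monopoly number with constant threshold `t`. -/
noncomputable def dynNumC {V : Type*} (G : SimpleGraph V) (t : ℕ) : ℕ :=
  dynNum G (fun _ => t)
lemma activStep_mono_aux {V : Type*} [Fintype V] (G : SimpleGraph V) (τ τ' : V → ℕ)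
    (hle : ∀ v, τ' v + 1 ≤ τ v) (u : V) {A A' : Set V} (h : A \ {u} ⊆ A') :
    activStep G τ A \ {u} ⊆ activStep G τ' A' := by
  rintro v ⟨hv, hvu⟩
  rcases hv with hv | hv
  · exact Or.inl (h ⟨hv, hvu⟩)
  · right
    simp only [Set.mem_setOf_eq] at hv ⊢
    have hsub : (G.neighborSet v ∩ A) \ {u} ⊆ G.neighborSet v ∩ A' := by
      rintro w ⟨⟨hw1, hw2⟩, hw3⟩
      exact ⟨hw1, h ⟨hw2, hw3⟩⟩
    have h1 : (G.neighborSet v ∩ A).ncard ≤ ((G.neighborSet v ∩ A) \ {u}).ncard + 1 := by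
      have : (G.neighborSet v ∩ A) ⊆ ((G.neighborSet v ∩ A) \ {u}) ∪ {u} := by
        intro w hw
        by_cases hwu : w = u
        · exact Or.inr hwu
        · exact Or.inl ⟨hw, hwu⟩
      calc (G.neighborSet v ∩ A).ncard
          ≤ (((G.neighborSet v ∩ A) \ {u}) ∪ {u}).ncard := Set.ncard_le_ncard this (Set.toFinite _)
        _ ≤ ((G.neighborSet v ∩ A) \ {u}).ncard + ({u} : Set V).ncard :=
            Set.ncard_union_le _ _
        _ = ((G.neighborSet v ∩ A) \ {u}).ncard + 1 := by simp
    have h2 : ((G.neighborSet v ∩ A) \ {u}).ncard ≤ (G.neighborSet v ∩ A').ncard :=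
      Set.ncard_le_ncard hsub (Set.toFinite _)
    have : τ v ≤ (G.neighborSet v ∩ A').ncard + 1 := hv.trans (h1.trans (by omega))
    have := hle v
    omega

lemma activStep_iter_mono {V : Type*} [Fintype V] (G : SimpleGraph V) (τ τ' : V → ℕ)
    (hle : ∀ v, τ' v + 1 ≤ τ v) (u : V) {A A' : Set V} (h : A \ {u} ⊆ A') (k : ℕ) :
    (activStep G τ)^[k] A \ {u} ⊆ (activStep G τ')^[k] A' := by
  induction k generalizing A A' with
  | zero => simpa using h
  | succ n ih =>
    rw [Function.iterate_succ_apply, Function.iterate_succ_apply]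
    exact ih (activStep_mono_aux G τ τ' hle u h)

/-- If `τ'(v) ≤ τ(v) − 1` for every vertex `v` (both being valid threshold assignments),
then `dyn_{τ'}(G) ≤ dyn_τ(G) − 1`. -/
theorem dyn_threshold_decrease {V : Type*} [Fintype V] [Nonempty V] (G : SimpleGraph V)
    (τ τ' : V → ℕ)
    (hτ : ∀ v, τ v ≤ (G.neighborSet v).ncard)
    (hτ' : ∀ v, τ' v ≤ (G.neighborSet v).ncard)
    (hle : ∀ v, τ' v + 1 ≤ τ v)
    (hd : 1 ≤ dynNum G τ) :
    dynNum G τ' ≤ dynNum G τ - 1 := by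
  have hne : {k | ∃ D : Set V, IsDynMonopoly G τ D ∧ D.ncard = k}.Nonempty :=
    ⟨(Set.univ : Set V).ncard, Set.univ, ⟨0, rfl⟩, rfl⟩
  obtain ⟨D, hD, hcard⟩ := Nat.sInf_mem hne
  rw [show sInf {k | ∃ D : Set V, IsDynMonopoly G τ D ∧ D.ncard = k} = dynNum G τ from rfl] at hcard
  have hDne : D.Nonempty := by
    rw [← Set.ncard_pos (Set.toFinite _), hcard]; exact hd
  obtain ⟨u, hu⟩ := hDne
  obtain ⟨k, hk⟩ := hD
  -- D \ {u} is a τ'-monopoly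
  have hsub : (activStep G τ)^[k] D \ {u} ⊆ (activStep G τ')^[k] (D \ {u}) :=
    activStep_iter_mono G τ τ' hle u (subset_refl _) k
  rw [hk] at hsub
  have hmono : IsDynMonopoly G τ' (D \ {u}) := by
    refine ⟨k + 1, ?_⟩
    rw [Function.iterate_succ_apply']
    apply Set.eq_univ_of_forall
    intro v
    by_cases hvu : v = u
    · right
      simp only [Set.mem_setOf_eq]
      have hsub2 : G.neighborSet v ⊆ G.neighborSet v ∩ (activStep G τ')^[k] (D \ {u}) := by
        intro w hw
        refine ⟨hw, hsub ⟨Set.mem_univ w, ?_⟩⟩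
        rintro rfl
        exact G.notMem_neighborSet_self (hvu ▸ hw)
      exact (hτ' v).trans (Set.ncard_le_ncard hsub2 (Set.toFinite _))
    · exact Or.inl (hsub ⟨Set.mem_univ v, hvu⟩)
  have hle2 : dynNum G τ' ≤ (D \ {u}).ncard :=
    Nat.sInf_le ⟨D \ {u}, hmono, rfl⟩
  rwa [Set.ncard_diff_singleton_of_mem hu, hcard] at hle2
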